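/- Let U be a CIR over schema {A, ?B} and let G be the weighted complete bipartite graph with left vertex set V_A (the active domain of A, padded with dummy vertices connected to all right vertices with a fixed weight if |V_A| < |V_B|), right vertex set V_B (the union of the supports of the B-distributions), and weight of edge (a,b) equal to p(a,b) = ∏_{i: U[i][A]=a} Pr_{U[i][?B]}(b). Assume |V_A| ≤ |V_B|. Then the consistent samples of U with respect to {A → B, B → A} correspond to injections μ : V_A → V_B with p(a, μ(a)) > 0 for all a, the probability of the sample corresponding to μ is ∏_{a∈V_A} p(a, μ(a)), and a most probable consistent sample corresponds to an injection maximizing this product. If |V_A| > |V_B|, U has no consistent sample. -/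
import Mathlib


open Classical in
/-- For a CIR `U` over `{A, ?B}`, the consistent samples w.r.t. the matching
constraint `{A → B, B → A}` correspond to injections `μ` from the active domain `V_A` into the
support union `V_B` with `p(a, μ(a)) > 0` for all `a ∈ V_A`; the probability of the sample
corresponding to `μ` is `∏_{a ∈ V_A} p(a, μ(a))`; a most probable consistent sample corresponds
to such an injection maximizing this product; and if `|V_A| > |V_B|` there is no consistent
sample. -/
theorem stmt13 {ι V : Type} [Fintype ι] [Fintype V] [DecidableEq ι] [DecidableEq V]
    (Aval : ι → V) (p : ι → V → ℝ) (hnn : ∀ i b, 0 ≤ p i b) :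
    let VA : Finset V := Finset.univ.image Aval
    let VB : Finset V := Finset.univ.filter (fun b => ∃ i, 0 < p i b)
    let P : V → V → ℝ := fun a b => ∏ i ∈ Finset.univ.filter (fun i => Aval i = a), p i b
    let Consistent : (ι → V) → Prop := fun r =>
      0 < (∏ i : ι, p i (r i)) ∧ ∀ i j : ι, (Aval i = Aval j ↔ r i = r j)
    -- 1. consistent samples correspond to injections μ : V_A → V_B with p(a, μ a) > 0
    (∀ r : ι → V, Consistent r ↔
        ∃ μ : V → V, Set.InjOn μ ↑VA ∧ (∀ a ∈ VA, μ a ∈ VB) ∧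
          (∀ a ∈ VA, 0 < P a (μ a)) ∧ (∀ i : ι, r i = μ (Aval i)))
    -- 2. the probability of the sample corresponding to μ
    ∧ (∀ (r : ι → V) (μ : V → V), (∀ i : ι, r i = μ (Aval i)) →
        ∏ i : ι, p i (r i) = ∏ a ∈ VA, P a (μ a))
    -- 3. most probable consistent samples correspond to maximizing injections
    ∧ (∀ (r : ι → V) (μ : V → V), Consistent r → (∀ i : ι, r i = μ (Aval i)) →
        ((∀ r' : ι → V, Consistent r' → ∏ i : ι, p i (r' i) ≤ ∏ i : ι, p i (r i))
          ↔ ∀ ν : V → V, Set.InjOn ν ↑VA → (∀ a ∈ VA, 0 < P a (ν a)) →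
              ∏ a ∈ VA, P a (ν a) ≤ ∏ a ∈ VA, P a (μ a)))
    -- 4. if |V_A| > |V_B| then there is no consistent sample
    ∧ (VB.card < VA.card → ¬ ∃ r : ι → V, Consistent r) := by
  intro VA VB P Consistent
  -- Part 2 first, as a helper
  have part2 : ∀ (r : ι → V) (μ : V → V), (∀ i : ι, r i = μ (Aval i)) →
      ∏ i : ι, p i (r i) = ∏ a ∈ VA, P a (μ a) := by
    intro r μ hr
    have : ∏ i : ι, p i (r i) = ∏ i : ι, p i (μ (Aval i)) := by
      exact Finset.prod_congr rfl fun i _ => by rw [hr i]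
    rw [this]
    rw [← Finset.prod_fiberwise_of_maps_to (g := Aval) (t := VA)
      (fun i _ => Finset.mem_image_of_mem Aval (Finset.mem_univ i))
      (fun i => p i (μ (Aval i)))]
    refine Finset.prod_congr rfl fun a _ => ?_
    refine Finset.prod_congr rfl fun i hi => ?_
    simp only [Finset.mem_filter] at hi
    rw [hi.2]
  have part1 : ∀ r : ι → V, Consistent r ↔
      ∃ μ : V → V, Set.InjOn μ ↑VA ∧ (∀ a ∈ VA, μ a ∈ VB) ∧
        (∀ a ∈ VA, 0 < P a (μ a)) ∧ (∀ i : ι, r i = μ (Aval i)) := by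
    intro r
    constructor
    · rintro ⟨hpos, hiff⟩
      have hfac : ∀ i, 0 < p i (r i) := by
        intro i
        refine (hnn i (r i)).lt_of_ne fun h => ?_
        have hz := Finset.prod_eq_zero (f := fun i => p i (r i)) (Finset.mem_univ i) h.symm
        rw [hz] at hpos; exact lt_irrefl 0 hpos
      refine ⟨fun a => if h : ∃ i, Aval i = a then r h.choose else a, ?_, ?_, ?_, ?_⟩
      · intro a ha a' ha' hμ
        simp only [VA, Finset.coe_image, Set.mem_image] at ha ha'
        obtain ⟨i, _, hi⟩ := ha
        obtain ⟨j, _, hj⟩ := ha'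
        have h1 : ∃ k, Aval k = a := ⟨i, hi⟩
        have h2 : ∃ k, Aval k = a' := ⟨j, hj⟩
        simp only at hμ
        rw [dif_pos h1, dif_pos h2] at hμ
        have := (hiff h1.choose h2.choose).mpr hμ
        rw [h1.choose_spec, h2.choose_spec] at this
        exact this
      · intro a ha
        simp only [VA, Finset.mem_image] at ha
        obtain ⟨i, _, hi⟩ := ha
        have h1 : ∃ k, Aval k = a := ⟨i, hi⟩
        simp only
        rw [dif_pos h1]
        simp only [VB, Finset.mem_filter, Finset.mem_univ, true_and]
        exact ⟨h1.choose, hfac h1.choose⟩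
      · intro a ha
        simp only [VA, Finset.mem_image] at ha
        obtain ⟨i, _, hi⟩ := ha
        have h1 : ∃ k, Aval k = a := ⟨i, hi⟩
        simp only
        rw [dif_pos h1]
        refine Finset.prod_pos fun j hj => ?_
        simp only [Finset.mem_filter] at hj
        have : r j = r h1.choose := by
          refine (hiff j h1.choose).mp ?_
          rw [hj.2, h1.choose_spec]
        rw [← this]; exact hfac j
      · intro i
        have h1 : ∃ k, Aval k = Aval i := ⟨i, rfl⟩
        simp only
        rw [dif_pos h1]
        exact ((hiff i h1.choose).mp h1.choose_spec.symm)
    · rintro ⟨μ, hinj, _, hP, hr⟩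
      constructor
      · rw [part2 r μ hr]
        exact Finset.prod_pos fun a ha => hP a ha
      · intro i j
        constructor
        · intro h; rw [hr i, hr j, h]
        · intro h
          rw [hr i, hr j] at h
          exact hinj (by simp [VA]) (by simp [VA]) h
  refine ⟨part1, part2, ?_, ?_⟩
  · intro r μ hcons hr
    constructor
    · intro hmax ν hinj hP
      set r' : ι → V := fun i => ν (Aval i) with hr'
      have hcons' : Consistent r' := by
        rw [part1]
        refine ⟨ν, hinj, ?_, hP, fun i => rfl⟩
        intro a ha
        have hPa := hP a ha
        simp only [VB, Finset.mem_filter, Finset.mem_univ, true_and]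
        by_contra hc
        push_neg at hc
        simp only [VA, Finset.mem_image] at ha
        obtain ⟨i, _, hi⟩ := ha
        have hz : P a (ν a) = 0 :=
          Finset.prod_eq_zero (Finset.mem_filter.mpr ⟨Finset.mem_univ i, hi⟩)
            (le_antisymm (hc i) (hnn i (ν a)))
        rw [hz] at hPa; exact lt_irrefl 0 hPa
      calc ∏ a ∈ VA, P a (ν a) = ∏ i : ι, p i (r' i) := (part2 r' ν fun i => rfl).symm
        _ ≤ ∏ i : ι, p i (r i) := hmax r' hcons'
        _ = ∏ a ∈ VA, P a (μ a) := part2 r μ hr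
    · intro hmax r' hcons'
      obtain ⟨μ', hinj', _, hP', hr''⟩ := (part1 r').mp hcons'
      calc ∏ i : ι, p i (r' i) = ∏ a ∈ VA, P a (μ' a) := part2 r' μ' hr''
        _ ≤ ∏ a ∈ VA, P a (μ a) := hmax μ' hinj' hP'
        _ = ∏ i : ι, p i (r i) := (part2 r μ hr).symm
  · rintro hcard ⟨r, hcons⟩
    obtain ⟨μ, hinj, hmem, _, _⟩ := (part1 r).mp hcons
    have := Finset.card_le_card_of_injOn μ hmem hinj
    omega
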